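/- Let C4 be the cycle graph on vertices {0,1,2,3} with edges {0,1}, {1,2}, {2,3}, {3,0}, and let d be its shortest-path distance. For p, q ∈ [0,1] define the probability distribution f(p,q) on {0,1,2,3} by f(p,q)(0) = pq, f(p,q)(1) = q(1−p), f(p,q)(2) = (1−p)(1−q), f(p,q)(3) = p(1−q). Then for all p0, q0, p1, q1 ∈ [0,1], W1(f(p0,q0), f(p1,q1)) = |p1 − p0| + |q1 − q0|. -/

import Mathlib

open scoped BigOperators
open Set

/-- The cycle graph `C4` on vertices `ZMod 4 = {0,1,2,3}`, with edges
`{0,1}, {1,2}, {2,3}, {3,0}`. -/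
def C4 : SimpleGraph (ZMod 4) := SimpleGraph.fromRel (fun x y => y = x + 1)

/-- The product distribution on the square generated by `p` and `q`. -/
noncomputable def fSquare (p q : ℝ) (x : ZMod 4) : ℝ :=
  if x = 0 then p * q
  else if x = 1 then q * (1 - p)
  else if x = 2 then (1 - p) * (1 - q)
  else p * (1 - q)

noncomputable def gC : ZMod 4 → ℝ := fun x => if x = 0 ∨ x = 3 then 1 else 0
noncomputable def hC : ZMod 4 → ℝ := fun x => if x = 0 ∨ x = 1 then 1 else 0

lemma gC0 : gC 0 = 1 := if_pos (Or.inl rfl)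
lemma gC1 : gC 1 = 0 := if_neg (by decide)
lemma gC2 : gC 2 = 0 := if_neg (by decide)
lemma gC3 : gC 3 = 1 := if_pos (Or.inr rfl)
lemma hC0 : hC 0 = 1 := if_pos (Or.inl rfl)
lemma hC1 : hC 1 = 1 := if_pos (Or.inr rfl)
lemma hC2 : hC 2 = 0 := if_neg (by decide)
lemma hC3 : hC 3 = 0 := if_neg (by decide)

lemma fS0 (p q : ℝ) : fSquare p q 0 = p * q := if_pos rfl
lemma fS1 (p q : ℝ) : fSquare p q 1 = q * (1 - p) := by
  rw [fSquare, if_neg (by decide), if_pos rfl]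
lemma fS2 (p q : ℝ) : fSquare p q 2 = (1 - p) * (1 - q) := by
  rw [fSquare, if_neg (by decide), if_neg (by decide), if_pos rfl]
lemma fS3 (p q : ℝ) : fSquare p q 3 = p * (1 - q) := by
  rw [fSquare, if_neg (by decide), if_neg (by decide), if_neg (by decide)]

lemma distgen (x y z : ZMod 4) (h1 : C4.Adj x y) (h2 : C4.Adj y z)
    (hne : x ≠ z) (hna : ¬ C4.Adj x z) : C4.dist x z = 2 := by
  have h2' : C4.dist x z ≤ 2 := by
    simpa using SimpleGraph.dist_le
      (SimpleGraph.Walk.cons h1 (SimpleGraph.Walk.cons h2 SimpleGraph.Walk.nil))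
  have h0 : 0 < C4.dist x z := SimpleGraph.Reachable.pos_dist_of_ne
    ⟨SimpleGraph.Walk.cons h1 (SimpleGraph.Walk.cons h2 SimpleGraph.Walk.nil)⟩ hne
  have h1' : C4.dist x z ≠ 1 := by rw [Ne, SimpleGraph.dist_eq_one_iff_adj]; exact hna
  omega

lemma dist02 : C4.dist 0 2 = 2 :=
  distgen 0 1 2 (by simp [C4]; decide) (by simp [C4]; decide) (by decide) (by simp [C4]; decide)
lemma dist13 : C4.dist 1 3 = 2 :=
  distgen 1 2 3 (by simp [C4]; decide) (by simp [C4]; decide) (by decide) (by simp [C4]; decide)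

lemma distTable : ∀ x y : ZMod 4, (C4.dist x y : ℝ) = |gC x - gC y| + |hC x - hC y| := by
  have a01 : C4.dist 0 1 = 1 := SimpleGraph.dist_eq_one_iff_adj.mpr (by simp [C4]; decide)
  have a12 : C4.dist 1 2 = 1 := SimpleGraph.dist_eq_one_iff_adj.mpr (by simp [C4]; decide)
  have a23 : C4.dist 2 3 = 1 := SimpleGraph.dist_eq_one_iff_adj.mpr (by simp [C4]; decide)
  have a03 : C4.dist 0 3 = 1 := SimpleGraph.dist_eq_one_iff_adj.mpr (by simp [C4]; decide)
  have a10 : C4.dist 1 0 = 1 := by rw [SimpleGraph.dist_comm]; exact a01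
  have a21 : C4.dist 2 1 = 1 := by rw [SimpleGraph.dist_comm]; exact a12
  have a32 : C4.dist 3 2 = 1 := by rw [SimpleGraph.dist_comm]; exact a23
  have a30 : C4.dist 3 0 = 1 := by rw [SimpleGraph.dist_comm]; exact a03
  have d02 := dist02
  have d13 := dist13
  have d20 : C4.dist 2 0 = 2 := by rw [SimpleGraph.dist_comm]; exact d02
  have d31 : C4.dist 3 1 = 2 := by rw [SimpleGraph.dist_comm]; exact d13
  have key : ∀ x : ZMod 4, x = 0 ∨ x = 1 ∨ x = 2 ∨ x = 3 := by decide
  intro x y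
  rcases key x with rfl | rfl | rfl | rfl <;> rcases key y with rfl | rfl | rfl | rfl <;>
    simp only [a01, a12, a23, a03, a10, a21, a32, a30, d02, d13, d20, d31,
      SimpleGraph.dist_self, gC0, gC1, gC2, gC3, hC0, hC1, hC2, hC3] <;>
    norm_num

lemma sum4 (f : ZMod 4 → ℝ) : ∑ x, f x = f 0 + f 1 + f 2 + f 3 := by
  show ∑ x : Fin 4, f x = _
  exact Fin.sum_univ_four f

-- min/max algebra
lemma rowTT (a b : ℝ) : min a b + max (a - b) 0 = a := by
  rcases le_total a b with h | h
  · rw [min_eq_left h, max_eq_right (by linarith : a - b ≤ 0)]; ring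
  · rw [min_eq_right h, max_eq_left (by linarith : (0:ℝ) ≤ a - b)]; ring
lemma rowFF (a b : ℝ) : max (b - a) 0 + min (1 - a) (1 - b) = 1 - a := by
  rcases le_total a b with h | h
  · rw [max_eq_left (by linarith : (0:ℝ) ≤ b - a), min_eq_right (by linarith : 1 - b ≤ 1 - a)]; ring
  · rw [max_eq_right (by linarith : b - a ≤ 0), min_eq_left (by linarith : 1 - a ≤ 1 - b)]; ring
lemma colT (a b : ℝ) : min a b + max (b - a) 0 = b := by
  rcases le_total a b with h | h
  · rw [min_eq_left h, max_eq_left (by linarith : (0:ℝ) ≤ b - a)]; ring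
  · rw [min_eq_right h, max_eq_right (by linarith : b - a ≤ 0)]; ring
lemma colF (a b : ℝ) : max (a - b) 0 + min (1 - a) (1 - b) = 1 - b := by
  rcases le_total a b with h | h
  · rw [max_eq_right (by linarith : a - b ≤ 0), min_eq_right (by linarith : 1 - b ≤ 1 - a)]; ring
  · rw [max_eq_left (by linarith : (0:ℝ) ≤ a - b), min_eq_left (by linarith : 1 - a ≤ 1 - b)]; ring
lemma absM (a b : ℝ) : max (a - b) 0 + max (b - a) 0 = |a - b| := by
  rcases le_total a b with h | h
  · rw [max_eq_right (by linarith : a - b ≤ 0), max_eq_left (by linarith : (0:ℝ) ≤ b - a),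
      abs_of_nonpos (by linarith : a - b ≤ 0)]; ring
  · rw [max_eq_left (by linarith : (0:ℝ) ≤ a - b), max_eq_right (by linarith : b - a ≤ 0),
      abs_of_nonneg (by linarith : (0:ℝ) ≤ a - b)]; ring
lemma totM (a b : ℝ) :
    min a b + max (a - b) 0 + max (b - a) 0 + min (1 - a) (1 - b) = 1 := by
  have h1 := rowTT a b
  have h2 := rowFF a b
  linarith

def aB : ZMod 4 → Bool := fun x => decide (x = 0 ∨ x = 3)
def bB : ZMod 4 → Bool := fun x => decide (x = 0 ∨ x = 1)

lemma aB0 : aB 0 = true := by decide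
lemma aB1 : aB 1 = false := by decide
lemma aB2 : aB 2 = false := by decide
lemma aB3 : aB 3 = true := by decide
lemma bB0 : bB 0 = true := by decide
lemma bB1 : bB 1 = true := by decide
lemma bB2 : bB 2 = false := by decide
lemma bB3 : bB 3 = false := by decide

noncomputable def cpl (u0 u1 : ℝ) : Bool → Bool → ℝ := fun s t =>
  if s then (if t then min u0 u1 else max (u0 - u1) 0)
  else (if t then max (u1 - u0) 0 else min (1 - u0) (1 - u1))

lemma cpl_nonneg (u0 u1 : ℝ) (h0 : u0 ∈ Icc (0:ℝ) 1) (h1 : u1 ∈ Icc (0:ℝ) 1)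
    (s t : Bool) : 0 ≤ cpl u0 u1 s t := by
  obtain ⟨h00, h01⟩ := h0
  obtain ⟨h10, h11⟩ := h1
  cases s <;> cases t <;> simp [cpl, le_max_iff, le_min_iff] <;> constructor <;> linarith

/-- on the 4-cycle, `W1(f(p0,q0), f(p1,q1)) = |p1−p0| + |q1−q0|`. -/
theorem statement19 (p0 q0 p1 q1 : ℝ)
    (hp0 : p0 ∈ Icc (0:ℝ) 1) (hq0 : q0 ∈ Icc (0:ℝ) 1)
    (hp1 : p1 ∈ Icc (0:ℝ) 1) (hq1 : q1 ∈ Icc (0:ℝ) 1) :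
    sInf {c : ℝ | ∃ π : ZMod 4 → ZMod 4 → ℝ,
      (∀ x y, 0 ≤ π x y) ∧
      (∀ x, ∑ y, π x y = fSquare p0 q0 x) ∧
      (∀ y, ∑ x, π x y = fSquare p1 q1 y) ∧
      c = ∑ x, ∑ y, (C4.dist x y : ℝ) * π x y} = |p1 - p0| + |q1 - q0| := by
  set S := {c : ℝ | ∃ π : ZMod 4 → ZMod 4 → ℝ,
      (∀ x y, 0 ≤ π x y) ∧
      (∀ x, ∑ y, π x y = fSquare p0 q0 x) ∧
      (∀ y, ∑ x, π x y = fSquare p1 q1 y) ∧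
      c = ∑ x, ∑ y, (C4.dist x y : ℝ) * π x y} with hS
  have key : ∀ x : ZMod 4, x = 0 ∨ x = 1 ∨ x = 2 ∨ x = 3 := by decide
  -- the witness coupling
  set π₀ : ZMod 4 → ZMod 4 → ℝ :=
    fun x y => cpl p0 p1 (aB x) (aB y) * cpl q0 q1 (bB x) (bB y) with hπ₀
  have hmem : (|p1 - p0| + |q1 - q0|) ∈ S := by
    refine ⟨π₀, fun x y => mul_nonneg (cpl_nonneg _ _ hp0 hp1 _ _) (cpl_nonneg _ _ hq0 hq1 _ _),
      ?_, ?_, ?_⟩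
    · intro x
      rcases key x with rfl | rfl | rfl | rfl <;>
        · rw [sum4]
          simp only [hπ₀, aB0, aB1, aB2, aB3, bB0, bB1, bB2, bB3, cpl,
            if_true, if_false, Bool.false_eq_true, fS0, fS1, fS2, fS3]
          first
          | linear_combination (min q0 q1 + max (q0 - q1) 0) * rowTT p0 p1 + p0 * rowTT q0 q1
          | linear_combination (min q0 q1 + max (q0 - q1) 0) * rowFF p0 p1 + (1 - p0) * rowTT q0 q1
          | linear_combination (max (q1 - q0) 0 + min (1 - q0) (1 - q1)) * rowFF p0 p1 + (1 - p0) * rowFF q0 q1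
          | linear_combination (max (q1 - q0) 0 + min (1 - q0) (1 - q1)) * rowTT p0 p1 + p0 * rowFF q0 q1
    · intro y
      rcases key y with rfl | rfl | rfl | rfl <;>
        · rw [sum4]
          simp only [hπ₀, aB0, aB1, aB2, aB3, bB0, bB1, bB2, bB3, cpl,
            if_true, if_false, Bool.false_eq_true, fS0, fS1, fS2, fS3]
          first
          | linear_combination (min q0 q1 + max (q1 - q0) 0) * colT p0 p1 + p1 * colT q0 q1
          | linear_combination (min q0 q1 + max (q1 - q0) 0) * colF p0 p1 + (1 - p1) * colT q0 q1
          | linear_combination (max (q0 - q1) 0 + min (1 - q0) (1 - q1)) * colF p0 p1 + (1 - p1) * colF q0 q1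
          | linear_combination (max (q0 - q1) 0 + min (1 - q0) (1 - q1)) * colT p0 p1 + p1 * colF q0 q1
    · rw [sum4]
      conv_rhs => rw [sum4 (fun y => (C4.dist 0 y : ℝ) * π₀ 0 y),
        sum4 (fun y => (C4.dist 1 y : ℝ) * π₀ 1 y),
        sum4 (fun y => (C4.dist 2 y : ℝ) * π₀ 2 y),
        sum4 (fun y => (C4.dist 3 y : ℝ) * π₀ 3 y)]
      simp only [distTable, gC0, gC1, gC2, gC3, hC0, hC1, hC2, hC3,
        hπ₀, aB0, aB1, aB2, aB3, bB0, bB1, bB2, bB3, cpl,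
        if_true, if_false, Bool.false_eq_true]
      rw [abs_sub_comm p1 p0, abs_sub_comm q1 q0]
      norm_num
      linear_combination
        - ((min q0 q1 + max (q0 - q1) 0 + max (q1 - q0) 0 + min (1 - q0) (1 - q1)) * absM p0 p1
        + |p0 - p1| * totM q0 q1
        + (min p0 p1 + max (p0 - p1) 0 + max (p1 - p0) 0 + min (1 - p0) (1 - p1)) * absM q0 q1
        + |q0 - q1| * totM p0 p1)
  apply le_antisymm
  · exact csInf_le ⟨0, by
      rintro c ⟨π, hpos, -, -, rfl⟩
      exact Finset.sum_nonneg fun x _ => Finset.sum_nonneg fun y _ =>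
        mul_nonneg (by positivity) (hpos x y)⟩ hmem
  · refine le_csInf ⟨_, hmem⟩ ?_
    rintro c ⟨π, hpos, hm0, hm1, rfl⟩
    -- compute the two marginal integrals
    have eg0 : ∑ x, ∑ y, gC x * π x y = p0 := by
      have h : ∀ x : ZMod 4, ∑ y, gC x * π x y = gC x * fSquare p0 q0 x := fun x => by
        rw [← Finset.mul_sum, hm0 x]
      rw [Finset.sum_congr rfl fun x _ => h x, sum4]
      simp only [gC0, gC1, gC2, gC3, fS0, fS1, fS2, fS3]
      ring
    have eg1 : ∑ x, ∑ y, gC y * π x y = p1 := by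
      rw [Finset.sum_comm]
      have h : ∀ y : ZMod 4, ∑ x, gC y * π x y = gC y * fSquare p1 q1 y := fun y => by
        rw [← Finset.mul_sum, hm1 y]
      rw [Finset.sum_congr rfl fun y _ => h y, sum4]
      simp only [gC0, gC1, gC2, gC3, fS0, fS1, fS2, fS3]
      ring
    have eh0 : ∑ x, ∑ y, hC x * π x y = q0 := by
      have h : ∀ x : ZMod 4, ∑ y, hC x * π x y = hC x * fSquare p0 q0 x := fun x => by
        rw [← Finset.mul_sum, hm0 x]
      rw [Finset.sum_congr rfl fun x _ => h x, sum4]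
      simp only [hC0, hC1, hC2, hC3, fS0, fS1, fS2, fS3]
      ring
    have eh1 : ∑ x, ∑ y, hC y * π x y = q1 := by
      rw [Finset.sum_comm]
      have h : ∀ y : ZMod 4, ∑ x, hC y * π x y = hC y * fSquare p1 q1 y := fun y => by
        rw [← Finset.mul_sum, hm1 y]
      rw [Finset.sum_congr rfl fun y _ => h y, sum4]
      simp only [hC0, hC1, hC2, hC3, fS0, fS1, fS2, fS3]
      ring
    have hg : ∑ x, ∑ y, (gC x - gC y) * π x y = p0 - p1 := by
      have : ∀ x : ZMod 4, ∑ y, (gC x - gC y) * π x y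
          = (∑ y, gC x * π x y) - ∑ y, gC y * π x y := fun x => by
        rw [← Finset.sum_sub_distrib]
        exact Finset.sum_congr rfl fun y _ => by ring
      rw [Finset.sum_congr rfl fun x _ => this x, Finset.sum_sub_distrib, eg0, eg1]
    have hh : ∑ x, ∑ y, (hC x - hC y) * π x y = q0 - q1 := by
      have : ∀ x : ZMod 4, ∑ y, (hC x - hC y) * π x y
          = (∑ y, hC x * π x y) - ∑ y, hC y * π x y := fun x => by
        rw [← Finset.sum_sub_distrib]
        exact Finset.sum_congr rfl fun y _ => by ring
      rw [Finset.sum_congr rfl fun x _ => this x, Finset.sum_sub_distrib, eh0, eh1]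
    have hgabs : |p0 - p1| ≤ ∑ x, ∑ y, |gC x - gC y| * π x y := by
      rw [← hg]
      refine (Finset.abs_sum_le_sum_abs _ _).trans ?_
      refine Finset.sum_le_sum fun x _ => (Finset.abs_sum_le_sum_abs _ _).trans ?_
      refine le_of_eq (Finset.sum_congr rfl fun y _ => ?_)
      rw [abs_mul, abs_of_nonneg (hpos x y)]
    have hhabs : |q0 - q1| ≤ ∑ x, ∑ y, |hC x - hC y| * π x y := by
      rw [← hh]
      refine (Finset.abs_sum_le_sum_abs _ _).trans ?_
      refine Finset.sum_le_sum fun x _ => (Finset.abs_sum_le_sum_abs _ _).trans ?_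
      refine le_of_eq (Finset.sum_congr rfl fun y _ => ?_)
      rw [abs_mul, abs_of_nonneg (hpos x y)]
    have hsplit : ∑ x, ∑ y, (C4.dist x y : ℝ) * π x y
        = (∑ x, ∑ y, |gC x - gC y| * π x y) + ∑ x, ∑ y, |hC x - hC y| * π x y := by
      rw [← Finset.sum_add_distrib]
      refine Finset.sum_congr rfl fun x _ => ?_
      rw [← Finset.sum_add_distrib]
      refine Finset.sum_congr rfl fun y _ => ?_
      rw [distTable x y]; ring
    rw [hsplit, abs_sub_comm p1 p0, abs_sub_comm q1 q0]
    linarith
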